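/- Let d > 1 be real. If a,b ∈ A and i ≥ 1 are such that (E^i)_{a,b} > 0, then for all integers j ≥ 0 and k ≥ 1: F_{k+i}(e_b, (P*^{(0)},…,P*^{(k+i−1)}); 1/d, E) − Σ_{ℓ=0}^{k+i−1} ((d−1)/d^{ℓ+1})·γ ≥ F_k(e_a, (P*^{(j)},…,P*^{(j+k−1)}); 1/d, E) − Σ_{ℓ=0}^{k−1} ((d−1)/d^{ℓ+1})·γ. In particular, for every a ∈ A_∞ and every 0 ≤ i < L, the sequence n ↦ F_{Ln+i}(e_a, (P*^{(0)},…,P*^{(Ln+i−1)}); 1/d, E) − Σ_{ℓ=0}^{Ln+i−1} ((d−1)/d^{ℓ+1})·γ is nonnegative and non-decreasing in n. -/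

import Mathlib

open Filter Topology

/-- Assumption (A): `E` has nonnegative entries with all column sums and row sums positive. -/
def AssumptionA {A : Type*} [Fintype A] (E : Matrix A A ℝ) : Prop :=
  (∀ a b, 0 ≤ E a b) ∧ (∀ b, 0 < ∑ a, E a b) ∧ (∀ a, 0 < ∑ b, E a b)

/-- A probability vector indexed by the alphabet `A`. -/
def IsProbVec {A : Type*} [Fintype A] (π : A → ℝ) : Prop :=
  (∀ a, 0 ≤ π a) ∧ ∑ a, π a = 1

/-- A column-stochastic matrix: nonnegative entries, each column sums to `1`. -/
def IsColStochastic {A : Type*} [Fintype A] (P : Matrix A A ℝ) : Prop :=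
  (∀ a b, 0 ≤ P a b) ∧ ∀ b, ∑ a, P a b = 1

/-- The Kullback–Leibler divergence vector `D_KL(Q‖M)_b = Σ_a Q_{a,b} log(Q_{a,b}/M_{a,b})`
(the convention `0 · log(0/0) = 0` is automatic). -/
noncomputable def DKL {A : Type*} [Fintype A] (Q M : Matrix A A ℝ) : A → ℝ :=
  fun b => ∑ a, Q a b * Real.log (Q a b / M a b)

/-- The vectors `λ^{(i)}`: `λ^{(0)} = 0` and
`λ^{(i)}_a = ((d−1)/d^i) log Σ_b e^{(d^i/(d−1)) λ^{(i−1)}_b} E_{b,a}` (the summands with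
`E_{b,a} = 0` vanish, so the sum may be taken over all of `A`). -/
noncomputable def lam {A : Type*} [Fintype A] (E : Matrix A A ℝ) (d : ℝ) : ℕ → A → ℝ
  | 0 => fun _ => 0
  | i + 1 => fun a =>
      ((d - 1) / d ^ (i + 1)) *
        Real.log (∑ b, Real.exp (d ^ (i + 1) / (d - 1) * lam E d i b) * E b a)

/-- The optimal transition matrices `P*^{(i)}`. -/
noncomputable def Pstar {A : Type*} [Fintype A] (E : Matrix A A ℝ) (d : ℝ) (i : ℕ) :
    Matrix A A ℝ :=
  fun a b =>
    if 0 < E a b then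
      Real.exp (d ^ (i + 1) / (d - 1) * lam E d i a) * E a b /
        ∑ c, Real.exp (d ^ (i + 1) / (d - 1) * lam E d i c) * E c b
    else 0

/-- The ordered product `P^{(j)} P^{(j+1)} ⋯ P^{(k−1)}`. -/
noncomputable def matListProd {A : Type*} [Fintype A] [DecidableEq A]
    (P : ℕ → Matrix A A ℝ) (j k : ℕ) : Matrix A A ℝ :=
  ((List.range' j (k - j)).map P).prod

/-- The objective function
`F_k(π,P;1/d,E) = −Σ_{j=0}^{k−1} ((d−1)/d^{j+1}) D_KL(P^{(j)}‖E)^T (P^{(j+1)}⋯P^{(k−1)}) π`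
(only `P 0, …, P (k−1)` are used). -/
noncomputable def Fk {A : Type*} [Fintype A] [DecidableEq A] (E : Matrix A A ℝ) (d : ℝ)
    (k : ℕ) (π : A → ℝ) (P : ℕ → Matrix A A ℝ) : ℝ :=
  -∑ j ∈ Finset.range k, ((d - 1) / d ^ (j + 1)) *
      ∑ b, DKL (P j) E b * (matListProd P (j + 1) k).mulVec π b

/-- `P^{(k)}(d,E)`: the maximum of `F_k` over the feasible domain. -/
noncomputable def Pk {A : Type*} [Fintype A] [DecidableEq A] (E : Matrix A A ℝ)
    (d : ℝ) (k : ℕ) : ℝ :=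
  sSup {x : ℝ | ∃ π P, IsProbVec π ∧ (∀ j < k, IsColStochastic (P j)) ∧
    (∀ j < k, ∀ a b, E a b = 0 → P j a b = 0) ∧ x = Fk E d k π P}

/-- `α = log min_b Σ_a E_{a,b}`. -/
noncomputable def alp {A : Type*} [Fintype A] (E : Matrix A A ℝ) : ℝ :=
  Real.log (sInf {x : ℝ | ∃ b, x = ∑ a, E a b})

/-- `β = log max_b Σ_a E_{a,b}`. -/
noncomputable def bet {A : Type*} [Fintype A] (E : Matrix A A ℝ) : ℝ :=
  Real.log (sSup {x : ℝ | ∃ b, x = ∑ a, E a b})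

/-- `γ = log min{E_{a,b} : E_{a,b} > 0}`. -/
noncomputable def gam {A : Type*} [Fintype A] (E : Matrix A A ℝ) : ℝ :=
  Real.log (sInf {x : ℝ | 0 < x ∧ ∃ a b, E a b = x})

/-- `A_∞`: the symbols lying on a cycle, i.e. `a` with `(E^n)_{a,a} > 0` for some `n ≥ 1`. -/
def AinfSet {A : Type*} [Fintype A] [DecidableEq A] (E : Matrix A A ℝ) : Set A :=
  {a | ∃ n : ℕ, 1 ≤ n ∧ 0 < (E ^ n) a a}

/-- `L`: the least `n ≥ 1` with `(E^n)_{a,a} > 0` for all `a ∈ A_∞`. -/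
noncomputable def Lconst {A : Type*} [Fintype A] [DecidableEq A] (E : Matrix A A ℝ) : ℕ :=
  sInf {n : ℕ | 1 ≤ n ∧ ∀ a ∈ AinfSet E, 0 < (E ^ n) a a}

set_option linter.unusedSectionVars false
set_option linter.unusedVariables false
set_option maxHeartbeats 800000

section Aux1
variable {A : Type*} [Fintype A] [DecidableEq A] {E : Matrix A A ℝ} {d : ℝ}

lemma exp_gam_le {x y : A} (hxy : 0 < E x y) : Real.exp (gam E) ≤ E x y := by
  have hfin : {t : ℝ | 0 < t ∧ ∃ a b, E a b = t}.Finite :=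
    Set.Finite.subset (Set.finite_range fun p : A × A => E p.1 p.2)
      (by rintro z ⟨_, a, b, rfl⟩; exact ⟨(a, b), rfl⟩)
  have hne : {t : ℝ | 0 < t ∧ ∃ a b, E a b = t}.Nonempty := ⟨E x y, hxy, x, y, rfl⟩
  have hmem := hne.csInf_mem hfin
  calc Real.exp (gam E) = sInf {t : ℝ | 0 < t ∧ ∃ a b, E a b = t} := by
        rw [gam]; exact Real.exp_log hmem.1
    _ ≤ E x y := csInf_le hfin.bddBelow ⟨hxy, x, y, rfl⟩

lemma col_pos (hE : ∀ a b, 0 ≤ E a b) (hcol : ∀ b, 0 < ∑ a, E a b) (b : A) :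
    ∃ a, 0 < E a b := by
  by_contra h
  push_neg at h
  have : ∑ a, E a b ≤ 0 := Finset.sum_nonpos fun a _ => h a
  linarith [hcol b]

lemma Zpos (hE : ∀ a b, 0 ≤ E a b) (hcol : ∀ b, 0 < ∑ a, E a b) (m : ℕ) (b : A) :
    0 < ∑ c, Real.exp (d ^ (m + 1) / (d - 1) * lam E d m c) * E c b := by
  obtain ⟨a, ha⟩ := col_pos hE hcol b
  refine Finset.sum_pos' (fun c _ => mul_nonneg (Real.exp_nonneg _) (hE c b)) ⟨a, Finset.mem_univ a, mul_pos (Real.exp_pos _) ha⟩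

lemma edge_lemma (hE : ∀ a b, 0 ≤ E a b) (hd : 1 < d) {x y : A} (hxy : 0 < E x y) (m : ℕ) :
    lam E d m x + ((d - 1) / d ^ (m + 1)) * gam E ≤ lam E d (m + 1) y := by
  have hd0 : (0:ℝ) < d := lt_trans one_pos hd
  have hd1 : (0:ℝ) < d - 1 := by linarith
  have hc : (0:ℝ) < (d - 1) / d ^ (m + 1) := by positivity
  have ht : (0:ℝ) < d ^ (m + 1) / (d - 1) := by positivity
  have hterm : Real.exp (d ^ (m + 1) / (d - 1) * lam E d m x + gam E) ≤
      ∑ c, Real.exp (d ^ (m + 1) / (d - 1) * lam E d m c) * E c y := by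
    have h1 : Real.exp (d ^ (m + 1) / (d - 1) * lam E d m x + gam E) ≤
        Real.exp (d ^ (m + 1) / (d - 1) * lam E d m x) * E x y := by
      rw [Real.exp_add]
      exact mul_le_mul_of_nonneg_left (exp_gam_le hxy) (Real.exp_nonneg _)
    refine h1.trans (Finset.single_le_sum (f := fun c =>
      Real.exp (d ^ (m + 1) / (d - 1) * lam E d m c) * E c y)
      (fun c _ => by have := hE c y; positivity) (Finset.mem_univ x))
  have hlog := Real.log_le_log (Real.exp_pos _) hterm
  rw [Real.log_exp] at hlog
  have := mul_le_mul_of_nonneg_left hlog (le_of_lt hc)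
  calc lam E d m x + ((d - 1) / d ^ (m + 1)) * gam E
      = ((d - 1) / d ^ (m + 1)) * (d ^ (m + 1) / (d - 1) * lam E d m x + gam E) := by
        field_simp
    _ ≤ ((d - 1) / d ^ (m + 1)) *
        Real.log (∑ c, Real.exp (d ^ (m + 1) / (d - 1) * lam E d m c) * E c y) := this
    _ = lam E d (m + 1) y := by rw [lam]

end Aux1

section Aux2
variable {A : Type*} [Fintype A] [DecidableEq A] {E : Matrix A A ℝ} {d : ℝ}

lemma pow_apply_nonneg (hE : ∀ a b, 0 ≤ E a b) : ∀ n x y, 0 ≤ (E ^ n) x y := by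
  intro n
  induction n with
  | zero => intro x y; simp [Matrix.one_apply]; positivity
  | succ n ih =>
    intro x y
    rw [pow_succ, Matrix.mul_apply]
    exact Finset.sum_nonneg fun c _ => mul_nonneg (ih x c) (hE c y)

/-- Path lemma: `μ^{(m)}_x ≤ μ^{(m+i)}_y` whenever there is a positive path of length `i`. -/
lemma path_lemma (hE : ∀ a b, 0 ≤ E a b) (hd : 1 < d) :
    ∀ (i : ℕ) (x y : A), 0 < (E ^ i) x y → ∀ m : ℕ,
      lam E d m x - (∑ ℓ ∈ Finset.range m, (d - 1) / d ^ (ℓ + 1)) * gam E ≤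
        lam E d (m + i) y - (∑ ℓ ∈ Finset.range (m + i), (d - 1) / d ^ (ℓ + 1)) * gam E := by
  intro i
  induction i with
  | zero =>
    intro x y h m
    rw [pow_zero, Matrix.one_apply] at h
    by_cases hxy : x = y
    · subst hxy; simp
    · simp [hxy] at h
  | succ i ih =>
    intro x y h m
    rw [pow_succ, Matrix.mul_apply] at h
    obtain ⟨z, _, hz⟩ : ∃ z ∈ Finset.univ, 0 < (E ^ i) x z * E z y := by
      by_contra hcon
      push_neg at hcon
      have : ∑ c, (E ^ i) x c * E c y ≤ 0 :=
        Finset.sum_nonpos fun c hc => hcon c hc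
      linarith
    have h1 : 0 < (E ^ i) x z := by
      rcases lt_or_ge 0 ((E ^ i) x z) with h' | h'
      · exact h'
      · exfalso
        have : (E ^ i) x z * E z y ≤ 0 :=
          mul_nonpos_of_nonpos_of_nonneg h' (hE z y)
        linarith
    have h2 : 0 < E z y := by
      rcases lt_or_ge 0 (E z y) with h' | h'
      · exact h'
      · exfalso
        have : (E ^ i) x z * E z y ≤ 0 :=
          mul_nonpos_of_nonneg_of_nonpos (pow_apply_nonneg hE i x z) h'
        linarith
    have step := edge_lemma hE hd h2 (m + i)
    have hrec := ih x z h1 m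
    have hsum : ∑ ℓ ∈ Finset.range (m + (i + 1)), (d - 1) / d ^ (ℓ + 1)
        = (∑ ℓ ∈ Finset.range (m + i), (d - 1) / d ^ (ℓ + 1)) + (d - 1) / d ^ (m + i + 1) := by
      rw [show m + (i + 1) = (m + i) + 1 by ring, Finset.sum_range_succ]
    rw [hsum, show m + (i + 1) = (m + i) + 1 by ring,
      show (∑ ℓ ∈ Finset.range (m + i), (d - 1) / d ^ (ℓ + 1) + (d - 1) / d ^ (m + i + 1)) * gam E
        = (∑ ℓ ∈ Finset.range (m + i), (d - 1) / d ^ (ℓ + 1)) * gam E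
          + (d - 1) / d ^ (m + i + 1) * gam E from by ring]
    linarith [step, hrec]

/-- Gibbs / log-sum inequality. -/
lemma gibbs (q w : A → ℝ) (hq0 : ∀ a, 0 ≤ q a) (hq1 : ∑ a, q a = 1)
    (hw0 : ∀ a, 0 ≤ w a) (hsupp : ∀ a, w a = 0 → q a = 0) (hW : 0 < ∑ a, w a) :
    ∑ a, q a * Real.log (w a / q a) ≤ Real.log (∑ a, w a) := by
  set S := ∑ a, w a with hS
  have key : ∀ a, q a * Real.log (w a / q a) - q a * Real.log S ≤ w a / S - q a := by
    intro a
    rcases eq_or_lt_of_le (hq0 a) with h | h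
    · rw [← h]; simp
      exact div_nonneg (hw0 a) hW.le
    · have hwa : 0 < w a := by
        rcases eq_or_lt_of_le (hw0 a) with h' | h'
        · exact absurd (hsupp a h'.symm) (by linarith)
        · exact h'
      have hx : 0 < w a / (q a * S) := by positivity
      have := Real.log_le_sub_one_of_pos hx
      have hlog : Real.log (w a / (q a * S)) = Real.log (w a / q a) - Real.log S := by
        rw [show w a / (q a * S) = (w a / q a) / S by field_simp,
          Real.log_div (by positivity) (by positivity)]
      rw [hlog] at this
      have := mul_le_mul_of_nonneg_left this (le_of_lt h)
      have hq : q a * (w a / (q a * S) - 1) = w a / S - q a := by field_simp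
      calc q a * Real.log (w a / q a) - q a * Real.log S
          = q a * (Real.log (w a / q a) - Real.log S) := by ring
        _ ≤ q a * (w a / (q a * S) - 1) := this
        _ = w a / S - q a := hq
  have hsumineq : ∑ a, (q a * Real.log (w a / q a) - q a * Real.log S) ≤
      ∑ a, (w a / S - q a) := Finset.sum_le_sum fun a _ => key a
  rw [Finset.sum_sub_distrib, Finset.sum_sub_distrib, ← Finset.sum_mul, hq1,
    ← Finset.sum_div, ← hS] at hsumineq
  rw [div_self (ne_of_gt hW)] at hsumineq
  linarith

end Aux2

section Aux3
variable {A : Type*} [Fintype A] [DecidableEq A] {E : Matrix A A ℝ} {d : ℝ}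

lemma Pstar_colStochastic (hE : ∀ a b, 0 ≤ E a b) (hcol : ∀ b, 0 < ∑ a, E a b) (m : ℕ) :
    IsColStochastic (Pstar E d m) := by
  constructor
  · intro a b
    rw [Pstar]
    split
    · have hZ := Zpos (d := d) hE hcol m b
      next h => exact div_nonneg (mul_nonneg (Real.exp_nonneg _) (hE a b)) hZ.le
    · exact le_refl 0
  · intro b
    have hZ := Zpos (d := d) hE hcol m b
    have : ∀ a, Pstar E d m a b =
        Real.exp (d ^ (m + 1) / (d - 1) * lam E d m a) * E a b /
          ∑ c, Real.exp (d ^ (m + 1) / (d - 1) * lam E d m c) * E c b := by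
      intro a
      rw [Pstar]
      split
      · rfl
      · next h =>
          have : E a b = 0 := le_antisymm (not_lt.mp h) (hE a b)
          rw [this, mul_zero, zero_div]
    simp only [this]
    rw [← Finset.sum_div, div_self (ne_of_gt hZ)]

lemma Pstar_supp (a b : A) (m : ℕ) (h : E a b = 0) : Pstar E d m a b = 0 := by
  rw [Pstar, if_neg (by rw [h]; exact lt_irrefl 0)]

/-- Per-column inequality (Gibbs): for admissible column-stochastic `Q`. -/
lemma col_opt_le (hE : ∀ a b, 0 ≤ E a b) (hcol : ∀ b, 0 < ∑ a, E a b) (hd : 1 < d)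
    {Q : Matrix A A ℝ} (hQ : IsColStochastic Q) (hQsupp : ∀ a b, E a b = 0 → Q a b = 0)
    (m : ℕ) (b : A) :
    (∑ a, Q a b * lam E d m a) - ((d - 1) / d ^ (m + 1)) * DKL Q E b ≤ lam E d (m + 1) b := by
  have hd0 : (0:ℝ) < d := lt_trans one_pos hd
  have hd1 : (0:ℝ) < d - 1 := by linarith
  set t : ℝ := d ^ (m + 1) / (d - 1) with ht
  have htpos : 0 < t := by positivity
  have hct : ((d - 1) / d ^ (m + 1)) * t = 1 := by rw [ht]; field_simp
  have hkey : ∑ a, Q a b * Real.log ((Real.exp (t * lam E d m a) * E a b) / Q a b) ≤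
      Real.log (∑ c, Real.exp (t * lam E d m c) * E c b) := by
    apply gibbs
    · exact fun a => hQ.1 a b
    · exact hQ.2 b
    · exact fun a => mul_nonneg (Real.exp_nonneg _) (hE a b)
    · intro a ha
      rcases mul_eq_zero.mp ha with h | h
      · exact absurd h (Real.exp_ne_zero _)
      · exact hQsupp a b h
    · exact Zpos hE hcol m b
  have hterm : ∀ a, Q a b * Real.log ((Real.exp (t * lam E d m a) * E a b) / Q a b) =
      Q a b * (t * lam E d m a) - Q a b * Real.log (Q a b / E a b) := by
    intro a
    rcases eq_or_lt_of_le (hQ.1 a b) with h | h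
    · rw [← h]; ring
    · have hEab : 0 < E a b := by
        rcases eq_or_lt_of_le (hE a b) with h' | h'
        · exact absurd (hQsupp a b h'.symm) (by linarith)
        · exact h'
      rw [Real.log_div (by positivity) (by positivity),
        Real.log_div (by positivity) (by positivity),
        Real.log_mul (by positivity) (by positivity), Real.log_exp]
      ring
  simp only [hterm] at hkey
  rw [Finset.sum_sub_distrib] at hkey
  have hDKL : ∑ a, Q a b * Real.log (Q a b / E a b) = DKL Q E b := rfl
  rw [hDKL] at hkey
  have hsum : ∑ a, Q a b * (t * lam E d m a) = t * ∑ a, Q a b * lam E d m a := by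
    rw [Finset.mul_sum]; exact Finset.sum_congr rfl fun a _ => by ring
  rw [hsum] at hkey
  have hlam : lam E d (m + 1) b =
      ((d - 1) / d ^ (m + 1)) * Real.log (∑ c, Real.exp (t * lam E d m c) * E c b) := by
    rw [lam, ht]
  rw [hlam]
  have hc : (0:ℝ) < (d - 1) / d ^ (m + 1) := by positivity
  have := mul_le_mul_of_nonneg_left hkey hc.le
  calc (∑ a, Q a b * lam E d m a) - ((d - 1) / d ^ (m + 1)) * DKL Q E b
      = ((d - 1) / d ^ (m + 1)) * (t * ∑ a, Q a b * lam E d m a - DKL Q E b) := by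
        rw [mul_sub, ← mul_assoc, hct, one_mul]
    _ ≤ ((d - 1) / d ^ (m + 1)) * Real.log (∑ c, Real.exp (t * lam E d m c) * E c b) := this

/-- Per-column equality at the optimum `Pstar`. -/
lemma col_opt_eq (hE : ∀ a b, 0 ≤ E a b) (hcol : ∀ b, 0 < ∑ a, E a b) (hd : 1 < d)
    (m : ℕ) (b : A) :
    (∑ a, Pstar E d m a b * lam E d m a) - ((d - 1) / d ^ (m + 1)) * DKL (Pstar E d m) E b
      = lam E d (m + 1) b := by
  have hd0 : (0:ℝ) < d := lt_trans one_pos hd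
  have hd1 : (0:ℝ) < d - 1 := by linarith
  set t : ℝ := d ^ (m + 1) / (d - 1) with ht
  have hct : ((d - 1) / d ^ (m + 1)) * t = 1 := by rw [ht]; field_simp
  set Z : ℝ := ∑ c, Real.exp (t * lam E d m c) * E c b with hZdef
  have hZ : 0 < Z := Zpos hE hcol m b
  have hterm : ∀ a, Pstar E d m a b * Real.log (Pstar E d m a b / E a b) =
      Pstar E d m a b * (t * lam E d m a - Real.log Z) := by
    intro a
    by_cases h : 0 < E a b
    · have hP : Pstar E d m a b = Real.exp (t * lam E d m a) * E a b / Z := by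
        rw [Pstar, if_pos h, ht, hZdef]
      rw [hP]
      congr 1
      rw [show Real.exp (t * lam E d m a) * E a b / Z / E a b
          = Real.exp (t * lam E d m a) / Z by field_simp,
        Real.log_div (Real.exp_ne_zero _) (ne_of_gt hZ), Real.log_exp]
    · have hE0 : E a b = 0 := le_antisymm (not_lt.mp h) (hE a b)
      rw [Pstar_supp a b m hE0]
      ring
  have hsum1 : ∑ a, Pstar E d m a b = 1 := (Pstar_colStochastic hE hcol m).2 b
  have hDKL : DKL (Pstar E d m) E b
      = t * (∑ a, Pstar E d m a b * lam E d m a) - Real.log Z := by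
    unfold DKL
    calc ∑ a, Pstar E d m a b * Real.log (Pstar E d m a b / E a b)
        = ∑ a, (Pstar E d m a b * (t * lam E d m a) - Pstar E d m a b * Real.log Z) := by
          refine Finset.sum_congr rfl fun a _ => ?_
          rw [hterm a]; ring
      _ = t * (∑ a, Pstar E d m a b * lam E d m a) - (∑ a, Pstar E d m a b) * Real.log Z := by
          rw [Finset.sum_sub_distrib, ← Finset.sum_mul, Finset.mul_sum]
          congr 1
          exact Finset.sum_congr rfl fun a _ => by ring
      _ = t * (∑ a, Pstar E d m a b * lam E d m a) - Real.log Z := by rw [hsum1, one_mul]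
  have hlam : lam E d (m + 1) b = ((d - 1) / d ^ (m + 1)) * Real.log Z := by
    simp only [lam]
    rw [hZdef, ht]
  rw [hDKL, hlam, mul_sub, ← mul_assoc, hct]
  ring
end Aux3

section Aux4
variable {A : Type*} [Fintype A] [DecidableEq A]

lemma matListProd_self (P : ℕ → Matrix A A ℝ) (k : ℕ) : matListProd P k k = 1 := by
  rw [matListProd, Nat.sub_self]
  simp

lemma matListProd_concat (P : ℕ → Matrix A A ℝ) {j k : ℕ} (h : j ≤ k) :
    matListProd P j (k + 1) = matListProd P j k * P k := by
  rw [matListProd, matListProd, show k + 1 - j = (k - j) + 1 by omega, List.range'_concat,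
    List.map_append, List.prod_append]
  simp [Nat.add_sub_cancel' h]

lemma Fk_succ (E : Matrix A A ℝ) (d : ℝ) (k : ℕ) (π : A → ℝ) (P : ℕ → Matrix A A ℝ) :
    Fk E d (k + 1) π P =
      Fk E d k ((P k).mulVec π) P -
        ((d - 1) / d ^ (k + 1)) * ∑ b, DKL (P k) E b * π b := by
  rw [Fk, Fk, Finset.sum_range_succ]
  have hlast : (matListProd P (k + 1) (k + 1)).mulVec π = π := by
    rw [matListProd_self, Matrix.one_mulVec]
  rw [hlast]
  have hmid : ∀ j ∈ Finset.range k,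
      ((d - 1) / d ^ (j + 1)) * ∑ b, DKL (P j) E b * (matListProd P (j + 1) (k + 1)).mulVec π b
      = ((d - 1) / d ^ (j + 1)) *
          ∑ b, DKL (P j) E b * (matListProd P (j + 1) k).mulVec ((P k).mulVec π) b := by
    intro j hj
    have hjk : j + 1 ≤ k := Finset.mem_range.mp hj
    rw [matListProd_concat P hjk, ← Matrix.mulVec_mulVec]
  rw [Finset.sum_congr rfl hmid]
  ring

lemma Fk_zero (E : Matrix A A ℝ) (d : ℝ) (π : A → ℝ) (P : ℕ → Matrix A A ℝ) :
    Fk E d 0 π P = 0 := by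
  rw [Fk]
  simp

lemma mulVec_nonneg {Q : Matrix A A ℝ} (hQ : ∀ a b, 0 ≤ Q a b) {π : A → ℝ}
    (hπ : ∀ a, 0 ≤ π a) : ∀ a, 0 ≤ Q.mulVec π a := by
  intro a
  rw [Matrix.mulVec, dotProduct]
  exact Finset.sum_nonneg fun b _ => mul_nonneg (hQ a b) (hπ b)

lemma swap_sum (Q : Matrix A A ℝ) (v π : A → ℝ) :
    ∑ a, v a * Q.mulVec π a = ∑ b, (∑ a, Q a b * v a) * π b := by
  simp only [Matrix.mulVec, dotProduct, Finset.mul_sum, Finset.sum_mul]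
  rw [Finset.sum_comm]
  exact Finset.sum_congr rfl fun b _ => Finset.sum_congr rfl fun a _ => by ring

/-- Upper bound: `F_k(π,P) ≤ ⟨λ^{(k)}, π⟩` for admissible `P` and nonnegative `π`. -/
lemma Fk_le (E : Matrix A A ℝ) {d : ℝ} (hE : ∀ a b, 0 ≤ E a b)
    (hcol : ∀ b, 0 < ∑ a, E a b) (hd : 1 < d) (P : ℕ → Matrix A A ℝ)
    (hP : ∀ j, IsColStochastic (P j)) (hPsupp : ∀ j a b, E a b = 0 → P j a b = 0) :
    ∀ (k : ℕ) (π : A → ℝ), (∀ a, 0 ≤ π a) → Fk E d k π P ≤ ∑ a, lam E d k a * π a := by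
  intro k
  induction k with
  | zero => intro π hπ; rw [Fk_zero]; simp [lam]
  | succ k ih =>
    intro π hπ
    rw [Fk_succ]
    have h1 := ih ((P k).mulVec π) (mulVec_nonneg (hP k).1 hπ)
    have h2 : ∑ a, lam E d k a * (P k).mulVec π a
        = ∑ b, (∑ a, P k a b * lam E d k a) * π b := swap_sum (P k) _ π
    have h3 : ∑ b, (∑ a, P k a b * lam E d k a) * π b -
        ((d - 1) / d ^ (k + 1)) * ∑ b, DKL (P k) E b * π b
        = ∑ b, ((∑ a, P k a b * lam E d k a) - ((d - 1) / d ^ (k + 1)) * DKL (P k) E b) * π b := by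
      rw [Finset.mul_sum, ← Finset.sum_sub_distrib]
      exact Finset.sum_congr rfl fun b _ => by ring
    have h4 : ∑ b, ((∑ a, P k a b * lam E d k a) - ((d - 1) / d ^ (k + 1)) * DKL (P k) E b) * π b
        ≤ ∑ b, lam E d (k + 1) b * π b := by
      refine Finset.sum_le_sum fun b _ => ?_
      exact mul_le_mul_of_nonneg_right
        (col_opt_le hE hcol hd (hP k) (hPsupp k) k b) (hπ b)
    calc Fk E d k ((P k).mulVec π) P - ((d - 1) / d ^ (k + 1)) * ∑ b, DKL (P k) E b * π b
        ≤ ∑ a, lam E d k a * (P k).mulVec π a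
            - ((d - 1) / d ^ (k + 1)) * ∑ b, DKL (P k) E b * π b := by linarith
      _ = ∑ b, ((∑ a, P k a b * lam E d k a) - ((d - 1) / d ^ (k + 1)) * DKL (P k) E b) * π b := by
          rw [h2]; exact h3
      _ ≤ ∑ b, lam E d (k + 1) b * π b := h4

/-- Equality at `Pstar`: `F_k(π,P^*) = ⟨λ^{(k)}, π⟩`. -/
lemma Fk_eq (E : Matrix A A ℝ) {d : ℝ} (hE : ∀ a b, 0 ≤ E a b)
    (hcol : ∀ b, 0 < ∑ a, E a b) (hd : 1 < d) :
    ∀ (k : ℕ) (π : A → ℝ), Fk E d k π (fun ℓ => Pstar E d ℓ) = ∑ a, lam E d k a * π a := by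
  intro k
  induction k with
  | zero => intro π; rw [Fk_zero]; simp [lam]
  | succ k ih =>
    intro π
    rw [Fk_succ, ih]
    rw [swap_sum (Pstar E d k) _ π]
    rw [Finset.mul_sum, ← Finset.sum_sub_distrib]
    refine Finset.sum_congr rfl fun b _ => ?_
    rw [show (∑ a, Pstar E d k a b * lam E d k a) * π b
        - (d - 1) / d ^ (k + 1) * (DKL (Pstar E d k) E b * π b)
      = ((∑ a, Pstar E d k a b * lam E d k a)
        - (d - 1) / d ^ (k + 1) * DKL (Pstar E d k) E b) * π b from by ring,
      col_opt_eq hE hcol hd k b]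

end Aux4

section Aux5
variable {A : Type*} [Fintype A] [DecidableEq A] {E : Matrix A A ℝ} {d : ℝ}

lemma exists_pos_factor (hE : ∀ a b, 0 ≤ E a b) {p q : ℕ} {x y : A}
    (h : 0 < (E ^ (p + q)) x y) : ∃ z, 0 < (E ^ p) x z ∧ 0 < (E ^ q) z y := by
  rw [pow_add, Matrix.mul_apply] at h
  obtain ⟨z, _, hz⟩ : ∃ z ∈ Finset.univ, 0 < (E ^ p) x z * (E ^ q) z y := by
    by_contra hcon
    push_neg at hcon
    have : ∑ c, (E ^ p) x c * (E ^ q) c y ≤ 0 := Finset.sum_nonpos fun c hc => hcon c hc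
    linarith
  refine ⟨z, ?_, ?_⟩
  · rcases lt_or_ge 0 ((E ^ p) x z) with h' | h'
    · exact h'
    · exact absurd (mul_nonpos_of_nonpos_of_nonneg h' (pow_apply_nonneg hE q z y)) (by linarith)
  · rcases lt_or_ge 0 ((E ^ q) z y) with h' | h'
    · exact h'
    · exact absurd (mul_nonpos_of_nonneg_of_nonpos (pow_apply_nonneg hE p x z) h') (by linarith)

lemma pow_pos_mul (hE : ∀ a b, 0 ≤ E a b) {x : A} {p q : ℕ}
    (hp : 0 < (E ^ p) x x) (hq : 0 < (E ^ q) x x) : 0 < (E ^ (p + q)) x x := by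
  rw [pow_add, Matrix.mul_apply]
  exact Finset.sum_pos' (fun c _ =>
      mul_nonneg (pow_apply_nonneg hE p x c) (pow_apply_nonneg hE q c x))
    ⟨x, Finset.mem_univ x, mul_pos hp hq⟩

lemma cycle_pow (hE : ∀ a b, 0 ≤ E a b) {x : A} {n : ℕ} (hn : 0 < (E ^ n) x x) :
    ∀ q : ℕ, 1 ≤ q → 0 < (E ^ (n * q)) x x := by
  intro q hq
  induction q with
  | zero => omega
  | succ q ih =>
    rcases Nat.eq_or_lt_of_le hq with h | h
    · rw [← h, mul_one]; exact hn
    · have hq1 : 1 ≤ q := by omega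
      rw [show n * (q + 1) = n * q + n by ring]
      exact pow_pos_mul hE (ih hq1) hn

lemma Lconst_mem (hE : ∀ a b, 0 ≤ E a b) :
    1 ≤ Lconst E ∧ ∀ a ∈ AinfSet E, 0 < (E ^ Lconst E) a a := by
  classical
  have hne : {n : ℕ | 1 ≤ n ∧ ∀ a ∈ AinfSet E, 0 < (E ^ n) a a}.Nonempty := by
    set f : A → ℕ := fun a => if h : a ∈ AinfSet E then h.choose else 1 with hf
    have hf1 : ∀ a, 1 ≤ f a := by
      intro a
      by_cases h : a ∈ AinfSet E
      · simp only [hf, dif_pos h]; exact h.choose_spec.1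
      · simp only [hf, dif_neg h]; exact le_refl 1
    have hfa : ∀ a ∈ AinfSet E, 0 < (E ^ f a) a a := by
      intro a h
      simp only [hf, dif_pos h]
      exact h.choose_spec.2
    refine ⟨∏ a, f a, Finset.one_le_prod' fun a _ => hf1 a, ?_⟩
    intro a ha
    rw [← Finset.mul_prod_erase Finset.univ f (Finset.mem_univ a)]
    exact cycle_pow hE (hfa a ha) _ (Finset.one_le_prod' fun c _ => hf1 c)
  have := Nat.sInf_mem hne
  exact ⟨this.1, this.2⟩

lemma exists_path_to (hE : ∀ a b, 0 ≤ E a b) {a : A} (ha : a ∈ AinfSet E) (m : ℕ) :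
    ∃ x, 0 < (E ^ m) x a := by
  rcases Nat.eq_zero_or_pos m with hm | hm
  · subst hm
    exact ⟨a, by rw [pow_zero]; simp [Matrix.one_apply]⟩
  · obtain ⟨n, hn1, hn⟩ := ha
    have hq : 0 < (E ^ (n * m)) a a := cycle_pow hE hn m hm
    have hnm : n * m = (n * m - m) + m := by
      have : m ≤ n * m := Nat.le_mul_of_pos_left m (by omega)
      omega
    rw [hnm] at hq
    obtain ⟨z, _, hz⟩ := exists_pos_factor hE hq
    exact ⟨z, hz⟩

lemma single_nonneg (a : A) : ∀ c : A, 0 ≤ (Pi.single a 1 : A → ℝ) c := by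
  intro c
  rw [Pi.single_apply]
  split <;> norm_num

lemma sum_mul_single (v : A → ℝ) (a : A) : ∑ c, v c * (Pi.single a 1 : A → ℝ) c = v a := by
  rw [Finset.sum_eq_single a]
  · rw [Pi.single_eq_same, mul_one]
  · intro c _ hc
    rw [Pi.single_eq_of_ne hc, mul_zero]
  · intro h
    exact absurd (Finset.mem_univ a) h

end Aux5

/-- comparison of the shifted truncated objectives along admissible paths,
and the resulting nonnegativity and monotonicity along arithmetic progressions `Ln+i`. -/
theorem stmt15 {A : Type*} [Fintype A] [DecidableEq A] [Nonempty A] (E : Matrix A A ℝ)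
    (hE : AssumptionA E) (d : ℝ) (hd : 1 < d) :
    (∀ a b : A, ∀ i : ℕ, 1 ≤ i → 0 < (E ^ i) a b → ∀ j k : ℕ, 1 ≤ k →
      Fk E d k (Pi.single a 1) (fun ℓ => Pstar E d (j + ℓ)) -
          (∑ ℓ ∈ Finset.range k, (d - 1) / d ^ (ℓ + 1)) * gam E ≤
        Fk E d (k + i) (Pi.single b 1) (fun ℓ => Pstar E d ℓ) -
          (∑ ℓ ∈ Finset.range (k + i), (d - 1) / d ^ (ℓ + 1)) * gam E) ∧
    ∀ a ∈ AinfSet E, ∀ i : ℕ, i < Lconst E →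
      (∀ n : ℕ,
        0 ≤ Fk E d (Lconst E * n + i) (Pi.single a 1) (fun ℓ => Pstar E d ℓ) -
            (∑ ℓ ∈ Finset.range (Lconst E * n + i), (d - 1) / d ^ (ℓ + 1)) * gam E) ∧
      Monotone (fun n : ℕ =>
        Fk E d (Lconst E * n + i) (Pi.single a 1) (fun ℓ => Pstar E d ℓ) -
          (∑ ℓ ∈ Finset.range (Lconst E * n + i), (d - 1) / d ^ (ℓ + 1)) * gam E) := by
  obtain ⟨hE0, hcol, _⟩ := hE
  have hFkeq : ∀ (k : ℕ) (c : A),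
      Fk E d k (Pi.single c 1) (fun ℓ => Pstar E d ℓ) = lam E d k c := by
    intro k c
    rw [Fk_eq E hE0 hcol hd k (Pi.single c 1), sum_mul_single]
  constructor
  · intro a b i _ hEi j k _
    have h1 : Fk E d k (Pi.single a 1) (fun ℓ => Pstar E d (j + ℓ)) ≤ lam E d k a := by
      have := Fk_le E hE0 hcol hd (fun ℓ => Pstar E d (j + ℓ))
        (fun ℓ => Pstar_colStochastic hE0 hcol (j + ℓ))
        (fun ℓ x y h => Pstar_supp x y (j + ℓ) h)
        k (Pi.single a 1) (single_nonneg a)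
      rwa [sum_mul_single] at this
    have h3 := path_lemma hE0 hd i a b hEi k
    rw [hFkeq (k + i) b]
    linarith
  · intro a ha i _
    have hL := Lconst_mem (E := E) hE0
    constructor
    · intro n
      obtain ⟨x, hx⟩ := exists_path_to hE0 ha (Lconst E * n + i)
      have h0 := path_lemma hE0 hd (Lconst E * n + i) x a hx 0
      rw [hFkeq]
      have hz : lam E d 0 x = 0 := rfl
      simp only [Nat.zero_add, hz, Finset.sum_range_zero, zero_mul, sub_zero] at h0
      exact h0
    · apply monotone_nat_of_le_succ
      intro n
      rw [hFkeq, hFkeq]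
      have hstep := path_lemma hE0 hd (Lconst E) a a (hL.2 a ha) (Lconst E * n + i)
      have harith : Lconst E * n + i + Lconst E = Lconst E * (n + 1) + i := by ring
      rw [harith] at hstep
      linarith
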